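/- Let G = (V,E) be a connected graph with colouring ω from colour-set C, let u,v ∈ V and d ∈ C. Then the minimum number of flooding moves needed in G to link u and v in a monochromatic component of colour d equals the minimum, over all u-v paths P in G, of the number of moves needed to flood the isolated path P (with the induced colouring) entirely with colour d. That is, m_{G,ω}(u,v,d) = min_{P ∈ P_G(u,v)} m(P, ω|_P, d). -/

import Mathlib

namespace Flood

variable {V C : Type*}

/-- Two vertices are joined by an edge inside a monochromatic class. -/
def monoAdj (G : SimpleGraph V) (ω : V → C) (a b : V) : Prop :=
  G.Adj a b ∧ ω a = ω b

/-- `u` and `v` lie in a common monochromatic component of the colouring `ω`. -/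
def monoLinked (G : SimpleGraph V) (ω : V → C) (u v : V) : Prop :=
  Relation.ReflTransGen (monoAdj G ω) u v

/-- One flooding move: recolour the monochromatic component of `v` with colour `d`. -/
noncomputable def floodMove (G : SimpleGraph V) (ω : V → C) (v : V) (d : C) : V → C :=
  fun u => @ite _ (monoLinked G ω v u) (Classical.propDecidable _) d (ω u)

/-- Apply a sequence of flooding moves. -/
noncomputable def floodSeq (G : SimpleGraph V) (ω : V → C) (S : List (V × C)) : V → C :=
  S.foldl (fun ω' m => floodMove G ω' m.1 m.2) ω

/-- The sequence `S` floods `G`, i.e. makes it monochromatic. -/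
def Floods (G : SimpleGraph V) (ω : V → C) (S : List (V × C)) : Prop :=
  ∀ a b, floodSeq G ω S a = floodSeq G ω S b

/-- Minimum number of moves needed to make `G` monochromatic. -/
noncomputable def floodCost (G : SimpleGraph V) (ω : V → C) : ℕ :=
  sInf {k | ∃ S, S.length = k ∧ Floods G ω S}

/-- Minimum number of moves needed to make `G` monochromatic in colour `d`. -/
noncomputable def floodCostIn (G : SimpleGraph V) (ω : V → C) (d : C) : ℕ :=
  sInf {k | ∃ S, S.length = k ∧ ∀ a, floodSeq G ω S a = d}

/-- The sequence `S` links `u` and `v`. -/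
def Links (G : SimpleGraph V) (ω : V → C) (S : List (V × C)) (u v : V) : Prop :=
  monoLinked G (floodSeq G ω S) u v

/-- Minimum number of moves needed to link `u` and `v`. -/
noncomputable def linkCost (G : SimpleGraph V) (ω : V → C) (u v : V) : ℕ :=
  sInf {k | ∃ S, S.length = k ∧ Links G ω S u v}

/-- Minimum number of moves needed to link `u` and `v` in a monochromatic
component of colour `d`. -/
noncomputable def linkCostIn (G : SimpleGraph V) (ω : V → C) (u v : V) (d : C) : ℕ :=
  sInf {k | ∃ S, S.length = k ∧ Links G ω S u v ∧ floodSeq G ω S u = d}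


/-- The colouring induced on (the vertex sequence of) a walk, viewed as an
isolated path graph. -/
def pathColouring (ω : V → C) {G : SimpleGraph V} {u v : V}
    (P : G.Walk u v) : Fin (P.length + 1) → C :=
  fun i => ω (P.support.get (Fin.cast P.length_support.symm i))

end Flood

open Flood

namespace FloodAux

variable {V C : Type*} {G : SimpleGraph V} {ω : V → C}

/- ### basic monoLinked facts -/

theorem ml_refl (G : SimpleGraph V) (ω : V → C) (a : V) : monoLinked G ω a a :=
  Relation.ReflTransGen.refl

theorem ml_trans {a b c : V} (h1 : monoLinked G ω a b) (h2 : monoLinked G ω b c) :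
    monoLinked G ω a c := Relation.ReflTransGen.trans h1 h2

theorem ml_symm {a b : V} (h : monoLinked G ω a b) : monoLinked G ω b a := by
  induction h with
  | refl => exact Relation.ReflTransGen.refl
  | tail _ h2 ih =>
      exact Relation.ReflTransGen.trans
        (Relation.ReflTransGen.single ⟨h2.1.symm, h2.2.symm⟩) ih

theorem ml_colour {a b : V} (h : monoLinked G ω a b) : ω a = ω b := by
  induction h with
  | refl => rfl
  | tail _ h2 ih => exact ih.trans h2.2

theorem floodMove_eq_of_ml {w : V} {c : C} {x : V} (h : monoLinked G ω w x) :
    floodMove G ω w c x = c := by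
  simp [floodMove, h]

theorem floodMove_eq_of_not_ml {w : V} {c : C} {x : V} (h : ¬ monoLinked G ω w x) :
    floodMove G ω w c x = ω x := by
  simp [floodMove, h]

theorem floodMove_self (G : SimpleGraph V) (ω : V → C) (w : V) :
    floodMove G ω w (ω w) = ω := by
  funext x
  by_cases h : monoLinked G ω w x
  · rw [floodMove_eq_of_ml h, ml_colour h]
  · exact floodMove_eq_of_not_ml h

theorem floodSeq_nil (G : SimpleGraph V) (ω : V → C) : floodSeq G ω [] = ω := rfl

theorem floodSeq_cons (G : SimpleGraph V) (ω : V → C) (w : V) (c : C) (S : List (V × C)) :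
    floodSeq G ω ((w, c) :: S) = floodSeq G (floodMove G ω w c) S := rfl

/-- colour-d persistence -/
theorem floodSeq_persist {d : C} {S : List (V × C)} (hS : ∀ m ∈ S, m.2 = d)
    {z : V} (hz : ω z = d) : floodSeq G ω S z = d := by
  induction S generalizing ω with
  | nil => exact hz
  | cons m S ih =>
      obtain ⟨w, c⟩ := m
      have hc : c = d := hS (w, c) List.mem_cons_self
      subst hc
      rw [floodSeq_cons]
      refine ih (fun m hm => hS m (by simp [hm])) ?_
      by_cases h : monoLinked G ω w z
      · rw [floodMove_eq_of_ml h]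
      · rw [floodMove_eq_of_not_ml h]; exact hz

theorem floodSeq_mem {d : C} {S : List (V × C)} (hS : ∀ m ∈ S, m.2 = d)
    {z : V} (hz : (z, d) ∈ S) : floodSeq G ω S z = d := by
  induction S generalizing ω with
  | nil => simp at hz
  | cons m S ih =>
      obtain ⟨w, c⟩ := m
      have hc : c = d := hS (w, c) List.mem_cons_self
      subst hc
      rw [floodSeq_cons]
      rcases List.mem_cons.1 hz with h | h
      · have hw : w = z := by injection h.symm
        subst hw
        refine floodSeq_persist (fun m hm => hS m (by simp [hm])) ?_
        rw [floodMove_eq_of_ml (ml_refl _ _ _)]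
      · exact ih (fun m hm => hS m (by simp [hm])) h

end FloodAux

/- ### cost plumbing -/
section Cost
variable {V C : Type*} {G : SimpleGraph V} {ω : V → C} {d : C}
open FloodAux

theorem fCI_le_of_seq {S : List (V × C)} (h : ∀ a, floodSeq G ω S a = d) :
    floodCostIn G ω d ≤ S.length :=
  Nat.sInf_le ⟨S, rfl, h⟩

theorem fCI_spec (hne : {k | ∃ S : List (V × C), S.length = k ∧ ∀ a, floodSeq G ω S a = d}.Nonempty) :
    ∃ S : List (V × C), S.length = floodCostIn G ω d ∧ ∀ a, floodSeq G ω S a = d :=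
  Nat.sInf_mem hne

theorem fCI_le_succ_of_move {w : V} {c : C} {K : ℕ}
    (hne : {k | ∃ S : List (V × C), S.length = k ∧
        ∀ a, floodSeq G (floodMove G ω w c) S a = d}.Nonempty)
    (h : floodCostIn G (floodMove G ω w c) d ≤ K) :
    floodCostIn G ω d ≤ K + 1 := by
  obtain ⟨S, hlen, hS⟩ := Nat.sInf_mem hne
  have hlen' : S.length = floodCostIn G (floodMove G ω w c) d := hlen
  have : ∀ a, floodSeq G ω ((w, c) :: S) a = d := by
    intro a; rw [floodSeq_cons]; exact hS a
  calc floodCostIn G ω d ≤ ((w, c) :: S).length := fCI_le_of_seq this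
  _ = S.length + 1 := by simp
  _ ≤ K + 1 := by rw [hlen']; omega

end Cost

/- ### flooding everything along a finite set of vertices -/
section NE
variable {V C : Type*} {G : SimpleGraph V} (ω : V → C) (d : C)
open FloodAux

/-- a sequence that plays `(z, d)` for every vertex in the list -/
theorem floodSeq_all (L : List V) :
    ∀ z ∈ L, floodSeq G ω (L.map (fun z => (z, d))) z = d := by
  intro z hz
  refine floodSeq_mem (by simp) ?_
  simp only [List.mem_map]
  exact ⟨z, hz, rfl⟩

theorem pathNE {n : ℕ} (τ : Fin (n + 1) → C) (d : C) :
    {k | ∃ S : List (Fin (n + 1) × C), S.length = k ∧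
        ∀ a, floodSeq (SimpleGraph.pathGraph (n + 1)) τ S a = d}.Nonempty := by
  classical
  refine ⟨((List.finRange (n + 1)).map (fun z => (z, d))).length, _, rfl, ?_⟩
  intro a
  exact floodSeq_all τ d _ a (List.mem_finRange a)

end NE

/- ### monochromatic classes on path graphs are intervals -/
section PathML
open FloodAux
variable {C : Type*} {n : ℕ}

/-- `x` lies (weakly) between `i` and `j`. -/
def btwn {n : ℕ} (i j x : Fin (n + 1)) : Prop :=
  (i.val ≤ x.val ∧ x.val ≤ j.val) ∨ (j.val ≤ x.val ∧ x.val ≤ i.val)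

theorem pg_adj {i j : Fin (n + 1)} (h : i.val + 1 = j.val ∨ j.val + 1 = i.val) :
    (SimpleGraph.pathGraph (n + 1)).Adj i j :=
  SimpleGraph.pathGraph_adj.2 h

theorem ml_path_of_const_aux (τ : Fin (n + 1) → C) :
    ∀ (gap : ℕ) (i j : Fin (n + 1)), j.val - i.val = gap → i.val ≤ j.val →
      (∀ x, btwn i j x → τ x = τ i) →
      monoLinked (SimpleGraph.pathGraph (n + 1)) τ i j := by
  intro gap
  induction gap with
  | zero =>
      intro i j hgap hle _
      have : i = j := Fin.ext (by omega)
      subst this; exact ml_refl _ _ _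
  | succ g ih =>
      intro i j hgap hle hconst
      have hij : i.val < j.val := by omega
      have hi'lt : i.val + 1 < n + 1 := by omega
      have hci : τ ⟨i.val + 1, hi'lt⟩ = τ i := hconst ⟨i.val + 1, hi'lt⟩ (Or.inl (by constructor <;> simp <;> omega))
      have hadj : monoAdj (SimpleGraph.pathGraph (n + 1)) τ i ⟨i.val + 1, hi'lt⟩ :=
        ⟨pg_adj (Or.inl rfl), hci.symm⟩
      refine Relation.ReflTransGen.head hadj ?_
      refine ih ⟨i.val + 1, hi'lt⟩ j (by simp; omega) (by simp; omega) ?_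
      intro x hx
      rw [hci]
      refine hconst x ?_
      rcases hx with ⟨h1, h2⟩ | ⟨h1, h2⟩
      · exact Or.inl ⟨by simp at h1; omega, h2⟩
      · exact Or.inl ⟨by omega, by simp at h2; omega⟩

theorem ml_path_of_const (τ : Fin (n + 1) → C) (i j : Fin (n + 1))
    (hconst : ∀ x, btwn i j x → τ x = τ i) :
    monoLinked (SimpleGraph.pathGraph (n + 1)) τ i j := by
  rcases le_or_gt i.val j.val with h | h
  · exact ml_path_of_const_aux τ _ i j rfl h hconst
  · have hji : τ j = τ i := hconst j (Or.inr (by omega))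
    refine ml_symm (ml_path_of_const_aux τ _ j i rfl (by omega) ?_)
    intro x hx
    rw [hji]
    refine hconst x ?_
    rcases hx with ⟨h1, h2⟩ | ⟨h1, h2⟩
    · exact Or.inr ⟨h1, h2⟩
    · exact Or.inl ⟨h1, h2⟩

theorem ml_path_const {τ : Fin (n + 1) → C} {i j : Fin (n + 1)}
    (h : monoLinked (SimpleGraph.pathGraph (n + 1)) τ i j) :
    ∀ x, btwn i j x → τ x = τ i := by
  induction h using Relation.ReflTransGen.head_induction_on with
  | refl =>
      intro x hx
      have : x = j := Fin.ext (by rcases hx with ⟨h1,h2⟩|⟨h1,h2⟩ <;> omega)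
      rw [this]
  | head hadj _ ih =>
      rename_i a z _
      intro x hx
      obtain ⟨hadj', hcol⟩ := hadj
      have hz : z.val + 1 = a.val ∨ a.val + 1 = z.val := by
        rcases SimpleGraph.pathGraph_adj.1 hadj' with h | h
        · exact Or.inr h
        · exact Or.inl h
      by_cases hxa : x = a
      · rw [hxa]
      · have hxa' : x.val ≠ a.val := fun hh => hxa (Fin.ext hh)
        have hbtw : btwn z j x := by
          unfold btwn at hx ⊢
          omega
        rw [ih x hbtw, ← hcol]
end PathML

/- ### class bounds -/
section ClassBounds
open FloodAux
variable {C : Type*} {n : ℕ}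

theorem exists_class_bounds (τ : Fin (n + 1) → C) (w : Fin (n + 1)) :
    ∃ l r : Fin (n + 1), l.val ≤ w.val ∧ w.val ≤ r.val ∧
      (∀ x, monoLinked (SimpleGraph.pathGraph (n + 1)) τ w x ↔
        (l.val ≤ x.val ∧ x.val ≤ r.val)) := by
  classical
  set A : Finset (Fin (n + 1)) :=
    Finset.univ.filter (fun x => monoLinked (SimpleGraph.pathGraph (n + 1)) τ w x) with hA
  have hw : w ∈ A := by simp [hA, ml_refl]
  have hAne : A.Nonempty := ⟨w, hw⟩
  refine ⟨A.min' hAne, A.max' hAne, Finset.min'_le A w hw, Finset.le_max' A w hw, ?_⟩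
  have hmem : ∀ x, x ∈ A ↔ monoLinked (SimpleGraph.pathGraph (n + 1)) τ w x := by
    intro x; simp [hA]
  have hlr : ∀ y : Fin (n + 1), (A.min' hAne).val ≤ y.val → y.val ≤ (A.max' hAne).val →
      τ y = τ w := by
    intro y h1 h2
    rcases le_or_gt y.val w.val with hy | hy
    · exact ml_path_const ((hmem _).1 (A.min'_mem hAne)) y (Or.inr ⟨h1, hy⟩)
    · exact ml_path_const ((hmem _).1 (A.max'_mem hAne)) y (Or.inl ⟨hy.le, h2⟩)
  intro x
  constructor
  · intro hx
    exact ⟨Finset.min'_le A x ((hmem x).2 hx), Finset.le_max' A x ((hmem x).2 hx)⟩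
  · intro ⟨h1, h2⟩
    refine ml_path_of_const τ w x ?_
    intro y hy
    have hlw := Finset.min'_le A w hw
    have hwr := Finset.le_max' A w hw
    refine hlr y ?_ ?_ <;> (rcases hy with ⟨a1, a2⟩ | ⟨a1, a2⟩ <;> omega)
end ClassBounds

/- ### the master monotone-reindexing lemma -/
section Master
open FloodAux
variable {C : Type*}

theorem master (d : C) : ∀ (K : ℕ) {n m : ℕ} (τ : Fin (n + 1) → C)
    (g : Fin (m + 1) → Fin (n + 1)), Monotone g →
    floodCostIn (SimpleGraph.pathGraph (n + 1)) τ d ≤ K →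
    floodCostIn (SimpleGraph.pathGraph (m + 1)) (τ ∘ g) d ≤ K := by
  intro K
  induction K with
  | zero =>
      intro n m τ g hg hK
      obtain ⟨S, hlen, hS⟩ := fCI_spec (pathNE τ d)
      have hlen' : S.length = 0 := by
        have : S.length = floodCostIn (SimpleGraph.pathGraph (n + 1)) τ d := hlen
        omega
      rw [List.length_eq_zero_iff] at hlen'
      subst hlen'
      have hconst : ∀ a, τ a = d := hS
      refine le_trans (fCI_le_of_seq (S := []) ?_) (by simp)
      intro a; exact hconst (g a)
  | succ K ih =>
      intro n m τ g hg hK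
      obtain ⟨S, hlen, hS⟩ := fCI_spec (pathNE τ d)
      have hlen' : S.length = floodCostIn (SimpleGraph.pathGraph (n + 1)) τ d := hlen
      cases S with
      | nil =>
          have hconst : ∀ a, τ a = d := hS
          refine le_trans (fCI_le_of_seq (S := []) ?_) (by simp)
          intro a; exact hconst (g a)
      | cons mv S' =>
          obtain ⟨w, c⟩ := mv
          have hS' : ∀ a, floodSeq (SimpleGraph.pathGraph (n + 1))
              (floodMove (SimpleGraph.pathGraph (n + 1)) τ w c) S' a = d := by
            intro a
            have := hS a
            rwa [floodSeq_cons] at this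
          have hτ1 : floodCostIn (SimpleGraph.pathGraph (n + 1))
              (floodMove (SimpleGraph.pathGraph (n + 1)) τ w c) d ≤ K := by
            have h1 := fCI_le_of_seq hS'
            simp only [List.length_cons] at hlen'
            omega
          set τ1 := floodMove (SimpleGraph.pathGraph (n + 1)) τ w c with hτ1def
          by_cases hcase : ∃ w' : Fin (m + 1),
              monoLinked (SimpleGraph.pathGraph (n + 1)) τ w (g w')
          · obtain ⟨w', hw'⟩ := hcase
            obtain ⟨l, r, hlw, hwr, hiff⟩ := exists_class_bounds τ w
            have hgw' : l.val ≤ (g w').val ∧ (g w').val ≤ r.val := (hiff _).1 hw'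
            -- clamp into [l, r]
            set clampf : Fin (n + 1) → Fin (n + 1) :=
              fun x => if x.val < l.val then l else if r.val < x.val then r else x with hclampf
            have hcv : ∀ x : Fin (n + 1), (clampf x).val =
                if x.val < l.val then l.val else if r.val < x.val then r.val else x.val := by
              intro x
              simp only [hclampf]
              split_ifs <;> rfl
            classical
            set g' : Fin (m + 1) → Fin (n + 1) := fun j =>
              if monoLinked (SimpleGraph.pathGraph (m + 1)) (τ ∘ g) w' j
              then clampf (g j) else g j with hg'def
            -- preimage of the class is in the class of w'
            have hpre : ∀ j : Fin (m + 1), l.val ≤ (g j).val → (g j).val ≤ r.val →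
                monoLinked (SimpleGraph.pathGraph (m + 1)) (τ ∘ g) w' j := by
              intro j h1 h2
              refine ml_path_of_const (τ ∘ g) w' j ?_
              intro y hy
              have hgy : l.val ≤ (g y).val ∧ (g y).val ≤ r.val := by
                rcases hy with ⟨a1, a2⟩ | ⟨a1, a2⟩
                · have b1 : g w' ≤ g y := hg (Fin.le_def.2 a1)
                  have b2 : g y ≤ g j := hg (Fin.le_def.2 a2)
                  rw [Fin.le_def] at b1 b2
                  omega
                · have b1 : g j ≤ g y := hg (Fin.le_def.2 a1)
                  have b2 : g y ≤ g w' := hg (Fin.le_def.2 a2)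
                  rw [Fin.le_def] at b1 b2
                  omega
              have hmlgy : monoLinked (SimpleGraph.pathGraph (n + 1)) τ w (g y) :=
                (hiff _).2 ⟨hgy.1, hgy.2⟩
              have : τ (g y) = τ w := (ml_colour hmlgy).symm
              have hww' : τ (g w') = τ w := (ml_colour hw').symm
              simp only [Function.comp_apply, this, hww']
            -- the key state equality
            have hstate : floodMove (SimpleGraph.pathGraph (m + 1)) (τ ∘ g) w' c = τ1 ∘ g' := by
              funext j
              by_cases hj : monoLinked (SimpleGraph.pathGraph (m + 1)) (τ ∘ g) w' j
              · rw [floodMove_eq_of_ml hj]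
                have hg'j : g' j = clampf (g j) := by simp [hg'def, hj]
                have hcl : l.val ≤ (clampf (g j)).val ∧ (clampf (g j)).val ≤ r.val := by
                  rw [hcv]
                  split_ifs <;> omega
                have : monoLinked (SimpleGraph.pathGraph (n + 1)) τ w (clampf (g j)) :=
                  (hiff _).2 hcl
                simp only [Function.comp_apply, hg'j, hτ1def]
                rw [floodMove_eq_of_ml this]
              · rw [floodMove_eq_of_not_ml hj]
                have hg'j : g' j = g j := by simp [hg'def, hj]
                have hnml : ¬ monoLinked (SimpleGraph.pathGraph (n + 1)) τ w (g j) := by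
                  intro hml
                  exact hj (hpre j ((hiff _).1 hml).1 ((hiff _).1 hml).2)
                simp only [Function.comp_apply, hg'j, hτ1def]
                rw [floodMove_eq_of_not_ml hnml]
            -- monotonicity of g'
            have hg'mono : Monotone g' := by
              obtain ⟨l2, r2, hl2, hr2, hiff2⟩ := exists_class_bounds (τ ∘ g) w'
              intro j1 j2 h12
              rw [Fin.le_def] at h12
              have hgm : (g j1).val ≤ (g j2).val := by
                have := hg (Fin.le_def.2 h12); rwa [Fin.le_def] at this
              by_cases h1 : monoLinked (SimpleGraph.pathGraph (m + 1)) (τ ∘ g) w' j1 <;>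
                by_cases h2 : monoLinked (SimpleGraph.pathGraph (m + 1)) (τ ∘ g) w' j2 <;>
                simp only [hg'def, h1, h2, if_true, if_false] <;> rw [Fin.le_def]
              · rw [hcv, hcv]; split_ifs <;> omega
              · -- j1 in class, j2 not
                have hb1 := (hiff2 _).1 h1
                have hnb2 : ¬ (l2.val ≤ j2.val ∧ j2.val ≤ r2.val) :=
                  fun hh => h2 ((hiff2 _).2 hh)
                have hj2r : r2.val < j2.val := by omega
                have hw'j2 : w'.val ≤ j2.val := by omega
                have hgw'j2 : (g w').val ≤ (g j2).val := by
                  have := hg (Fin.le_def.2 hw'j2); rwa [Fin.le_def] at this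
                rw [hcv]
                split_ifs <;> omega
              · -- j1 not, j2 in
                have hb2 := (hiff2 _).1 h2
                have hnb1 : ¬ (l2.val ≤ j1.val ∧ j1.val ≤ r2.val) :=
                  fun hh => h1 ((hiff2 _).2 hh)
                have hj1l : j1.val < l2.val := by omega
                have hj1w' : j1.val ≤ w'.val := by omega
                have hgj1w' : (g j1).val ≤ (g w').val := by
                  have := hg (Fin.le_def.2 hj1w'); rwa [Fin.le_def] at this
                rw [hcv]
                split_ifs <;> omega
              · exact hgm
            -- conclude
            have hrec : floodCostIn (SimpleGraph.pathGraph (m + 1)) (τ1 ∘ g') d ≤ K :=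
              ih τ1 g' hg'mono hτ1
            refine fCI_le_succ_of_move (w := w') (c := c) (pathNE _ d) ?_
            rwa [hstate]
          · push_neg at hcase
            have heq : τ1 ∘ g = τ ∘ g := by
              funext j
              simp only [Function.comp_apply, hτ1def]
              exact floodMove_eq_of_not_ml (hcase j)
            have := ih τ1 g hg hτ1
            rw [heq] at this
            omega
end Master

/- ### walk infrastructure -/
section WalkInfra
open FloodAux SimpleGraph
variable {V C : Type*} {G : SimpleGraph V} {ω : V → C}

theorem support_get_eq_getVert {u v : V} (P : G.Walk u v) :
    ∀ (i : ℕ) (h : i < P.support.length), P.support.get ⟨i, h⟩ = P.getVert i := by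
  induction P with
  | nil => intro i h; simp [Walk.support_nil] at h; subst h; simp [Walk.support_nil, Walk.getVert]
  | cons hadj q ih =>
      intro i h
      cases i with
      | zero => simp [Walk.support_cons, Walk.getVert]
      | succ i =>
          simp only [Walk.support_cons, List.length_cons] at h
          simpa [Walk.support_cons, Walk.getVert_cons_succ] using ih i (by omega)

theorem pathColouring_eq_getVert {u v : V} (P : G.Walk u v) (i : Fin (P.length + 1)) :
    pathColouring ω P i = ω (P.getVert i.val) := by
  unfold pathColouring
  congr 1
  exact support_get_eq_getVert P i.val (by rw [P.length_support]; exact i.isLt)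

theorem getVert_mem_support {u v : V} (P : G.Walk u v) (i : ℕ) :
    P.getVert i ∈ P.support := by
  rcases le_or_gt i P.length with h | h
  · exact Walk.mem_support_iff_exists_getVert.2 ⟨i, rfl, h⟩
  · rw [Walk.getVert_of_length_le P h.le]
    exact Walk.end_mem_support P

/-- a walk whose support is all monolinked to its start -/
theorem mono_walk_of_ml {w₀ x : V} (h : monoLinked G ω w₀ x) :
    ∃ W : G.Walk w₀ x, ∀ z ∈ W.support, monoLinked G ω w₀ z := by
  induction h with
  | refl => exact ⟨Walk.nil, by simp [ml_refl]⟩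
  | tail _ hstep ih =>
      obtain ⟨W, hW⟩ := ih
      rename_i b c hab
      refine ⟨W.concat hstep.1, ?_⟩
      intro z hz
      rw [Walk.support_concat] at hz
      rcases List.mem_append.1 hz with hz | hz
      · exact hW z hz
      · have hzc : z = c := by simpa using hz
        subst hzc; exact Relation.ReflTransGen.tail hab hstep

/-- if all support vertices share one colour, endpoints are monolinked -/
theorem ml_of_const_walk {u v : V} (P : G.Walk u v)
    (h : ∀ z ∈ P.support, ω z = ω u) : monoLinked G ω u v := by
  induction P with
  | nil => exact ml_refl _ _ _
  | cons hadj q ih =>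
      rename_i a b c
      have hb : ω b = ω a := h b (by simp [Walk.support_cons, Walk.start_mem_support])
      refine Relation.ReflTransGen.head ⟨hadj, hb.symm⟩ ?_
      refine ih ?_
      intro z hz
      rw [hb]
      exact h z (by simp [Walk.support_cons, hz])

/-- split a walk at the first vertex satisfying a predicate -/
theorem exists_first_split (Dp : V → Prop) {u v : V} (P : G.Walk u v)
    (h : ∃ j, j ≤ P.length ∧ Dp (P.getVert j)) :
    ∃ (a : V) (P₁ : G.Walk u a) (R : G.Walk a v),
      Dp a ∧ P = P₁.append R ∧ ∀ j < P₁.length, ¬ Dp (P₁.getVert j) := by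
  induction P with
  | nil =>
      rename_i w
      obtain ⟨j, _, hj⟩ := h
      exact ⟨w, Walk.nil, Walk.nil, by simpa [Walk.getVert] using hj, rfl, by simp⟩
  | cons hadj q ih =>
      rename_i a b c
      by_cases hu : Dp a
      · exact ⟨a, Walk.nil, Walk.cons hadj q, hu, rfl, by simp⟩
      · have h' : ∃ j, j ≤ q.length ∧ Dp (q.getVert j) := by
          obtain ⟨j, hj1, hj2⟩ := h
          cases j with
          | zero => exact absurd (by simpa [Walk.getVert] using hj2) hu
          | succ j =>
              refine ⟨j, ?_, ?_⟩
              · simp only [Walk.length_cons] at hj1; omega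
              · rwa [Walk.getVert_cons_succ] at hj2
        obtain ⟨x, Q₁, R, hx, heq, hpre⟩ := ih h'
        refine ⟨x, Walk.cons hadj Q₁, R, hx, ?_, ?_⟩
        · rw [Walk.cons_append, ← heq]
        · intro j hj
          cases j with
          | zero => simpa [Walk.getVert] using hu
          | succ j =>
              rw [Walk.getVert_cons_succ]
              simp only [Walk.length_cons] at hj
              exact hpre j (by omega)

end WalkInfra

/- ### three-way split and linking plumbing -/
section Split
open FloodAux SimpleGraph
variable {V C : Type*} {G : SimpleGraph V} {ω : V → C}

theorem exists_three_split (Dp : V → Prop) {u v : V} (P : G.Walk u v)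
    (h : ∃ j, j ≤ P.length ∧ Dp (P.getVert j)) :
    ∃ (a b : V) (P₁ : G.Walk u a) (Mid : G.Walk a b) (P₂ : G.Walk b v),
      Dp a ∧ Dp b ∧ P = P₁.append (Mid.append P₂) ∧
      (∀ j < P₁.length, ¬ Dp (P₁.getVert j)) ∧
      (∀ j, 1 ≤ j → j ≤ P₂.length → ¬ Dp (P₂.getVert j)) := by
  obtain ⟨a, P₁, R, ha, heq, hpre⟩ := exists_first_split Dp P h
  have h2 : ∃ j, j ≤ R.reverse.length ∧ Dp (R.reverse.getVert j) :=
    ⟨R.reverse.length, le_refl _, by rw [Walk.getVert_length]; exact ha⟩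
  obtain ⟨b, Q₁, R', hb, heq2, hpre2⟩ := exists_first_split Dp R.reverse h2
  refine ⟨a, b, P₁, R'.reverse, Q₁.reverse, ha, hb, ?_, hpre, ?_⟩
  · rw [heq]
    congr 1
    have : R = R.reverse.reverse := (Walk.reverse_reverse R).symm
    rw [this, heq2, Walk.reverse_append]
  · intro j hj1 hj2
    rw [Walk.getVert_reverse]
    have hlen : Q₁.reverse.length = Q₁.length := Walk.length_reverse _
    refine hpre2 (Q₁.length - j) ?_
    omega

theorem links_cons (G : SimpleGraph V) (ω : V → C) (w : V) (c : C) (S : List (V × C))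
    {u v : V} : Links G ω ((w, c) :: S) u v ↔ Links G (floodMove G ω w c) S u v := by
  rw [Links, Links, floodSeq_cons]

theorem linkNE (hG : G.Connected) (ω : V → C) (u v : V) (d : C) :
    {k | ∃ S : List (V × C), S.length = k ∧ Links G ω S u v ∧ floodSeq G ω S u = d}.Nonempty := by
  obtain ⟨W⟩ := hG.preconnected u v
  refine ⟨(W.support.map (fun z => (z, d))).length, _, rfl, ?_, ?_⟩
  · refine ml_of_const_walk W ?_
    intro z hz
    rw [floodSeq_all ω d W.support z hz,
        floodSeq_all ω d W.support u (Walk.start_mem_support W)]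
  · exact floodSeq_all ω d W.support u (Walk.start_mem_support W)

theorem linkCostIn_le_of_seq {u v : V} {d : C} {S : List (V × C)}
    (h1 : Links G ω S u v) (h2 : floodSeq G ω S u = d) :
    linkCostIn G ω u v d ≤ S.length :=
  Nat.sInf_le ⟨S, rfl, h1, h2⟩

theorem linkCostIn_le_succ_of_move (hG : G.Connected) {u v : V} {d : C} {w : V} {c : C} {K : ℕ}
    (h : linkCostIn G (floodMove G ω w c) u v d ≤ K) :
    linkCostIn G ω u v d ≤ K + 1 := by
  obtain ⟨S, hlen, hS1, hS2⟩ := Nat.sInf_mem (linkNE hG (floodMove G ω w c) u v d)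
  have hlen' : S.length = linkCostIn G (floodMove G ω w c) u v d := hlen
  have hlink : Links G ω ((w, c) :: S) u v := (links_cons G ω w c S).2 hS1
  have hcol : floodSeq G ω ((w, c) :: S) u = d := by rw [floodSeq_cons]; exact hS2
  calc linkCostIn G ω u v d ≤ ((w, c) :: S).length := linkCostIn_le_of_seq hlink hcol
  _ = S.length + 1 := by simp
  _ ≤ K + 1 := by rw [hlen']; omega

/-- walking along constant positions gives a G-chain -/
theorem walk_ml_of_const_positions {u v : V} (W : G.Walk u v) :
    ∀ (gap : ℕ) (i j : Fin (W.length + 1)), j.val - i.val = gap → i.val ≤ j.val →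
      (∀ x, btwn i j x → pathColouring ω W x = pathColouring ω W i) →
      monoLinked G ω (W.getVert i.val) (W.getVert j.val) := by
  intro gap
  induction gap with
  | zero =>
      intro i j hgap hle _
      have : i = j := Fin.ext (by omega)
      subst this; exact ml_refl _ _ _
  | succ g ih =>
      intro i j hgap hle hconst
      have hij : i.val < j.val := by omega
      have hi'lt : i.val + 1 < W.length + 1 := by omega
      have hadjG : G.Adj (W.getVert i.val) (W.getVert (i.val + 1)) :=
        W.adj_getVert_succ (by omega)
      have hci : pathColouring ω W ⟨i.val + 1, hi'lt⟩ = pathColouring ω W i :=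
        hconst ⟨i.val + 1, hi'lt⟩ (Or.inl (by constructor <;> simp <;> omega))
      have hcolG : ω (W.getVert i.val) = ω (W.getVert (i.val + 1)) := by
        have e1 := pathColouring_eq_getVert (ω := ω) W i
        have e2 := pathColouring_eq_getVert (ω := ω) W ⟨i.val + 1, hi'lt⟩
        rw [e1, e2] at hci
        exact hci.symm
      refine Relation.ReflTransGen.head ⟨hadjG, hcolG⟩ ?_
      have := ih ⟨i.val + 1, hi'lt⟩ j (by simp; omega) (by simp; omega) ?_
      · exact this
      · intro x hx
        rw [hci]
        refine hconst x ?_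
        rcases hx with ⟨h1, h2⟩ | ⟨h1, h2⟩
        · exact Or.inl ⟨by simp at h1; omega, h2⟩
        · exact Or.inl ⟨by omega, by simp at h2; omega⟩

/-- positions in the path-game class of `i₀` have vertices in the `G`-class of
the corresponding vertex -/
theorem pos_class_sub_vertex_class {u v : V} (W : G.Walk u v) (i₀ : Fin (W.length + 1))
    {j : Fin (W.length + 1)}
    (h : monoLinked (SimpleGraph.pathGraph (W.length + 1)) (pathColouring ω W) i₀ j) :
    monoLinked G ω (W.getVert i₀.val) (W.getVert j.val) := by
  have hconst := ml_path_const h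
  rcases le_or_gt i₀.val j.val with hle | hlt
  · exact walk_ml_of_const_positions W _ i₀ j rfl hle hconst
  · have hji : pathColouring ω W j = pathColouring ω W i₀ := hconst j (Or.inr (by omega))
    refine ml_symm (walk_ml_of_const_positions W _ j i₀ rfl (by omega) ?_)
    intro x hx
    rw [hji]
    refine hconst x ?_
    rcases hx with ⟨h1, h2⟩ | ⟨h1, h2⟩
    · exact Or.inr ⟨h1, h2⟩
    · exact Or.inl ⟨h1, h2⟩

end Split

/- ### the rerouting construction -/
section Reroute
open FloodAux SimpleGraph
variable {V C : Type*} {G : SimpleGraph V} {ω : V → C}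

theorem reroute {u v w₀ : V} (W : G.Walk u v)
    (hw₀ : ∃ j, j ≤ W.length ∧ monoLinked G ω w₀ (W.getVert j)) :
    ∃ (Wt : G.Walk u v) (ℓ1 s ℓ2 a' : ℕ),
      W.length = ℓ1 + s + ℓ2 ∧ Wt.length = ℓ1 + a' + ℓ2 ∧
      (∀ k, k < ℓ1 → Wt.getVert k = W.getVert k) ∧
      (∀ k, k < ℓ1 → ¬ monoLinked G ω w₀ (W.getVert k)) ∧
      (∀ k, ℓ1 ≤ k → k ≤ ℓ1 + a' → monoLinked G ω w₀ (Wt.getVert k)) ∧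
      (∀ k, ℓ1 + a' < k → Wt.getVert k = W.getVert (k + s - a')) ∧
      (∀ k, ℓ1 + s < k → k ≤ W.length → ¬ monoLinked G ω w₀ (W.getVert k)) ∧
      monoLinked G ω w₀ (W.getVert ℓ1) ∧ monoLinked G ω w₀ (W.getVert (ℓ1 + s)) := by
  set Dp : V → Prop := fun z => monoLinked G ω w₀ z with hDp
  obtain ⟨a, b, P₁, Mid, P₂, ha, hb, heq, hpre, hpost⟩ := exists_three_split Dp W hw₀
  obtain ⟨Wa, hWa⟩ := mono_walk_of_ml (ω := ω) ha
  obtain ⟨Wb, hWb⟩ := mono_walk_of_ml (ω := ω) hb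
  set M : G.Walk a b := Wa.reverse.append Wb with hM
  have hMD : ∀ k, Dp (M.getVert k) := by
    intro k
    have hmem := getVert_mem_support M k
    rw [hM] at hmem
    rcases (Walk.mem_support_append_iff _ _).1 hmem with h | h
    · exact hWa _ (by rwa [Walk.support_reverse, List.mem_reverse] at h)
    · exact hWb _ h
  set Wt : G.Walk u v := P₁.append (M.append P₂) with hWt
  set ℓ1 := P₁.length with hℓ1
  set s := Mid.length with hs
  set ℓ2 := P₂.length with hℓ2
  set a' := M.length with ha'
  have hlenW : W.length = ℓ1 + s + ℓ2 := by
    rw [heq]; simp [Walk.length_append]; omega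
  have hlenWt : Wt.length = ℓ1 + a' + ℓ2 := by
    rw [hWt]; simp [Walk.length_append]; omega
  -- getVert computations
  have hWk : ∀ k, W.getVert k =
      if k < ℓ1 then P₁.getVert k
      else if k - ℓ1 < s then Mid.getVert (k - ℓ1) else P₂.getVert (k - ℓ1 - s) := by
    intro k
    rw [heq, Walk.getVert_append, Walk.getVert_append]
  have hWtk : ∀ k, Wt.getVert k =
      if k < ℓ1 then P₁.getVert k
      else if k - ℓ1 < a' then M.getVert (k - ℓ1) else P₂.getVert (k - ℓ1 - a') := by
    intro k
    rw [hWt, Walk.getVert_append, Walk.getVert_append]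
  refine ⟨Wt, ℓ1, s, ℓ2, a', hlenW, hlenWt, ?_, ?_, ?_, ?_, ?_, ?_, ?_⟩
  · intro k hk; rw [hWk, hWtk, if_pos hk, if_pos hk]
  · intro k hk; rw [hWk, if_pos hk]; exact hpre k hk
  · intro k hk1 hk2
    rw [hWtk, if_neg (by omega)]
    by_cases h : k - ℓ1 < a'
    · rw [if_pos h]; exact hMD _
    · rw [if_neg h]
      have : k - ℓ1 - a' = 0 := by omega
      rw [this, Walk.getVert_zero]
      exact hb
  · intro k hk
    rw [hWtk, hWk, if_neg (by omega), if_neg (by omega), if_neg (by omega), if_neg (by omega)]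
    congr 1
    omega
  · intro k hk1 hk2
    rw [hWk, if_neg (by omega), if_neg (by omega)]
    refine hpost (k - ℓ1 - s) (by omega) (by omega)
  · rw [hWk, if_neg (by omega)]
    by_cases h : s = 0
    · rw [if_neg (by omega)]
      have : ℓ1 - ℓ1 - s = 0 := by omega
      rw [this, Walk.getVert_zero]
      exact hb
    · rw [if_pos (by omega)]
      have : ℓ1 - ℓ1 = 0 := by omega
      rw [this, Walk.getVert_zero]
      exact ha
  · rw [hWk, if_neg (by omega), if_neg (by omega)]
    have : ℓ1 + s - ℓ1 - s = 0 := by omega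
    rw [this, Walk.getVert_zero]
    exact hb
end Reroute

/- ### direction (b): linkCostIn ≤ cost of any walk -/
section DirB
open FloodAux SimpleGraph
variable {V C : Type*} {G : SimpleGraph V}

theorem linkCostIn_le_walkCost (hG : G.Connected) (u v : V) (d : C) :
    ∀ (K : ℕ) (ω : V → C) (W : G.Walk u v),
      floodCostIn (SimpleGraph.pathGraph (W.length + 1)) (pathColouring ω W) d ≤ K →
      linkCostIn G ω u v d ≤ K := by
  have base : ∀ (ω : V → C) (W : G.Walk u v), (∀ a, pathColouring ω W a = d) →
      linkCostIn G ω u v d ≤ 0 := by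
    intro ω W hconst
    have hu : ω u = d := by
      have := hconst ⟨0, by omega⟩
      rwa [pathColouring_eq_getVert, Walk.getVert_zero] at this
    have hml : monoLinked G ω u v := by
      refine ml_of_const_walk W ?_
      intro z hz
      obtain ⟨j, hj1, hj2⟩ := Walk.mem_support_iff_exists_getVert.1 hz
      have := hconst ⟨j, by omega⟩
      rw [pathColouring_eq_getVert] at this
      simp only at this
      rw [hj1] at this
      rw [this, hu]
    exact linkCostIn_le_of_seq (S := []) hml hu
  intro K
  induction K with
  | zero =>
      intro ω W hK
      obtain ⟨S, hlen, hS⟩ := fCI_spec (pathNE (pathColouring ω W) d)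
      have hlen' : S.length = floodCostIn (SimpleGraph.pathGraph (W.length + 1))
          (pathColouring ω W) d := hlen
      have : S.length = 0 := by omega
      rw [List.length_eq_zero_iff] at this
      subst this
      exact base ω W hS
  | succ K ih =>
      intro ω W hK
      obtain ⟨S, hlen, hS⟩ := fCI_spec (pathNE (pathColouring ω W) d)
      have hlen' : S.length = floodCostIn (SimpleGraph.pathGraph (W.length + 1))
          (pathColouring ω W) d := hlen
      cases S with
      | nil => exact le_trans (base ω W hS) (by omega)
      | cons mv S' =>
          obtain ⟨i₀, c⟩ := mv
          have hS' : ∀ a, floodSeq (SimpleGraph.pathGraph (W.length + 1))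
              (floodMove (SimpleGraph.pathGraph (W.length + 1)) (pathColouring ω W) i₀ c)
              S' a = d := by
            intro a; have := hS a; rwa [floodSeq_cons] at this
          have hτ1K : floodCostIn (SimpleGraph.pathGraph (W.length + 1))
              (floodMove (SimpleGraph.pathGraph (W.length + 1)) (pathColouring ω W) i₀ c) d
              ≤ K := by
            have h1 := fCI_le_of_seq hS'
            simp only [List.length_cons] at hlen'
            omega
          by_cases hc : c = pathColouring ω W i₀
          · rw [hc, floodMove_self] at hτ1K
            exact le_trans (ih ω W hτ1K) (by omega)
          · set w₀ : V := W.getVert i₀.val with hw₀def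
            obtain ⟨Wt, ℓ1, s, ℓ2, a', hlW, hlWt, h3, h4, h5, h6, h7, h8a, h8b⟩ :=
              reroute (ω := ω) W ⟨i₀.val, by omega, ml_refl _ _ _⟩
            have hi₀1 : ℓ1 ≤ i₀.val := by
              by_contra hcon
              exact h4 i₀.val (by omega) (ml_refl _ _ _)
            have hi₀2 : i₀.val ≤ ℓ1 + s := by
              by_contra hcon
              exact h7 i₀.val (by omega) (by have := i₀.isLt; omega) (ml_refl _ _ _)
            set g : Fin (Wt.length + 1) → Fin (W.length + 1) := fun j =>
              if h : j.val < ℓ1 then ⟨j.val, by omega⟩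
              else if h2 : j.val ≤ ℓ1 + a' then i₀
              else ⟨j.val + s - a', by have := j.isLt; omega⟩ with hgdef
            have hgmono : Monotone g := by
              intro j1 j2 h12
              have h12' : j1.val ≤ j2.val := h12
              simp only [hgdef]
              split_ifs <;> simp only [Fin.le_def, Fin.val_mk] <;> omega
            have hident : pathColouring (floodMove G ω w₀ c) Wt =
                (floodMove (SimpleGraph.pathGraph (W.length + 1)) (pathColouring ω W) i₀ c)
                ∘ g := by
              funext j
              rw [pathColouring_eq_getVert]
              simp only [Function.comp_apply, hgdef]
              by_cases hj1 : j.val < ℓ1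
              · rw [dif_pos hj1]
                have hnotD : ¬ monoLinked G ω w₀ (W.getVert j.val) := h4 j.val hj1
                have hposnot : ¬ monoLinked (SimpleGraph.pathGraph (W.length + 1))
                    (pathColouring ω W) i₀ ⟨j.val, by omega⟩ := by
                  intro hml
                  exact hnotD (pos_class_sub_vertex_class W i₀ hml)
                rw [floodMove_eq_of_not_ml hposnot, pathColouring_eq_getVert]
                simp only
                rw [h3 j.val hj1, floodMove_eq_of_not_ml hnotD]
              · rw [dif_neg hj1]
                by_cases hj2 : j.val ≤ ℓ1 + a'
                · rw [dif_pos hj2]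
                  rw [floodMove_eq_of_ml (ml_refl _ _ _)]
                  exact floodMove_eq_of_ml (h5 j.val (by omega) hj2)
                · rw [dif_neg hj2]
                  have hz : Wt.getVert j.val = W.getVert (j.val + s - a') :=
                    h6 j.val (by omega)
                  have hnotD : ¬ monoLinked G ω w₀ (W.getVert (j.val + s - a')) :=
                    h7 _ (by omega) (by have := j.isLt; omega)
                  have hposnot : ¬ monoLinked (SimpleGraph.pathGraph (W.length + 1))
                      (pathColouring ω W) i₀ ⟨j.val + s - a', by have := j.isLt; omega⟩ := by
                    intro hml
                    exact hnotD (pos_class_sub_vertex_class W i₀ hml)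
                  rw [floodMove_eq_of_not_ml hposnot, pathColouring_eq_getVert]
                  simp only
                  rw [hz, floodMove_eq_of_not_ml hnotD]
            have hmaster : floodCostIn (SimpleGraph.pathGraph (Wt.length + 1))
                (pathColouring (floodMove G ω w₀ c) Wt) d ≤ K := by
              rw [hident]
              exact master d K _ g hgmono hτ1K
            have hlink1 : linkCostIn G (floodMove G ω w₀ c) u v d ≤ K :=
              ih (floodMove G ω w₀ c) Wt hmaster
            exact linkCostIn_le_succ_of_move hG hlink1
end DirB

/- ### direction (a): a linking sequence yields a cheap walk -/
section DirA
open FloodAux SimpleGraph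
variable {V C : Type*} {G : SimpleGraph V}

theorem exists_walk_of_link (u v : V) (d : C) :
    ∀ (S : List (V × C)) (ω : V → C), Links G ω S u v → floodSeq G ω S u = d →
      ∃ W : G.Walk u v,
        floodCostIn (SimpleGraph.pathGraph (W.length + 1)) (pathColouring ω W) d
          ≤ S.length := by
  intro S
  induction S with
  | nil =>
      intro ω h1 h2
      obtain ⟨W, hW⟩ := mono_walk_of_ml (ω := ω) h1
      refine ⟨W, le_trans (fCI_le_of_seq (S := []) ?_) (by simp)⟩
      intro a
      rw [floodSeq_nil, pathColouring_eq_getVert]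
      have hz := hW (W.getVert a.val) (getVert_mem_support W a.val)
      rw [← ml_colour hz]
      exact h2
  | cons mv S ih =>
      obtain ⟨w₀, c⟩ := mv
      intro ω h1 h2
      rw [links_cons] at h1
      rw [floodSeq_cons] at h2
      obtain ⟨W', hW'⟩ := ih (floodMove G ω w₀ c) h1 h2
      by_cases hc : c = ω w₀
      · rw [hc, floodMove_self] at hW'
        exact ⟨W', le_trans hW' (by simp)⟩
      · by_cases hover : ∃ j, j ≤ W'.length ∧ monoLinked G ω w₀ (W'.getVert j)
        · obtain ⟨Wt, ℓ1, s, ℓ2, a', hlW, hlWt, h3, h4, h5, h6, h7, h8a, h8b⟩ :=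
            reroute (ω := ω) W' hover
          have hℓ1W : ℓ1 < W'.length + 1 := by omega
          set τt := pathColouring (G := G) ω Wt with hτt
          have hτtv : ∀ j : Fin (Wt.length + 1), τt j = ω (Wt.getVert j.val) := by
            intro j; rw [hτt, pathColouring_eq_getVert]
          set c0 := ω w₀ with hc0
          have hDcol : ∀ z, monoLinked G ω w₀ z → ω z = c0 := by
            intro z hz; rw [hc0, ml_colour hz]
          -- the class of position ℓ1 in Wt is exactly [ℓ1, ℓ1+a']
          have hclass : ∀ j : Fin (Wt.length + 1),
              monoLinked (SimpleGraph.pathGraph (Wt.length + 1)) τt ⟨ℓ1, by omega⟩ j ↔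
              (ℓ1 ≤ j.val ∧ j.val ≤ ℓ1 + a') := by
            intro j
            constructor
            · intro hml
              have hconst := ml_path_const hml
              by_contra hcon
              rcases Nat.lt_or_ge j.val ℓ1 with hj | hj
              · -- position ℓ1 - 1 would be in the class
                have hpos : (⟨ℓ1 - 1, by omega⟩ : Fin (Wt.length + 1)).val = ℓ1 - 1 := rfl
                have hbtw : btwn (⟨ℓ1, by omega⟩ : Fin (Wt.length + 1)) j ⟨ℓ1 - 1, by omega⟩ :=
                  Or.inr (by simp; omega)
                have hcol := hconst _ hbtw
                rw [hτtv, hτtv] at hcol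
                simp only at hcol
                have hvert : Wt.getVert (ℓ1 - 1) = W'.getVert (ℓ1 - 1) := h3 _ (by omega)
                have hadj : G.Adj (Wt.getVert (ℓ1 - 1)) (Wt.getVert ℓ1) := by
                  have := Wt.adj_getVert_succ (i := ℓ1 - 1) (by omega)
                  have he : ℓ1 - 1 + 1 = ℓ1 := by omega
                  rwa [he] at this
                have hmlz : monoLinked G ω w₀ (Wt.getVert (ℓ1 - 1)) := by
                  refine ml_trans (h5 ℓ1 le_rfl (by omega)) ?_
                  exact Relation.ReflTransGen.single ⟨hadj.symm, hcol.symm⟩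
                rw [hvert] at hmlz
                exact h4 _ (by omega) hmlz
              · have hj2 : ℓ1 + a' < j.val := by omega
                have hℓ2pos : ℓ1 + a' + 1 ≤ Wt.length := by have := j.isLt; omega
                have hbtw : btwn (⟨ℓ1, by omega⟩ : Fin (Wt.length + 1)) j
                    ⟨ℓ1 + a' + 1, by omega⟩ := Or.inl (by simp; omega)
                have hcol := hconst _ hbtw
                rw [hτtv, hτtv] at hcol
                simp only at hcol
                have hvert : Wt.getVert (ℓ1 + a' + 1) = W'.getVert (ℓ1 + s + 1) := by
                  have := h6 (ℓ1 + a' + 1) (by omega)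
                  rw [this]
                  congr 1
                  omega
                have hadj : G.Adj (Wt.getVert (ℓ1 + a')) (Wt.getVert (ℓ1 + a' + 1)) :=
                  Wt.adj_getVert_succ (by omega)
                have hmlz : monoLinked G ω w₀ (Wt.getVert (ℓ1 + a' + 1)) := by
                  refine ml_trans (h5 (ℓ1 + a') (by omega) le_rfl) ?_
                  refine Relation.ReflTransGen.single ⟨hadj, ?_⟩
                  have hc1 : ω (Wt.getVert (ℓ1 + a')) = c0 :=
                    hDcol _ (h5 (ℓ1 + a') (by omega) le_rfl)
                  have hc2 : ω (Wt.getVert ℓ1) = c0 := hDcol _ (h5 ℓ1 le_rfl (by omega))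
                  rw [hc1, ← hc2]
                  exact hcol.symm
                rw [hvert] at hmlz
                exact h7 _ (by omega) (by omega) hmlz
            · intro ⟨hj1, hj2⟩
              refine ml_path_of_const τt _ j ?_
              intro x hx
              have hx' : ℓ1 ≤ x.val ∧ x.val ≤ ℓ1 + a' := by
                rcases hx with ⟨b1, b2⟩ | ⟨b1, b2⟩ <;> simp at b1 b2 <;> omega
              rw [hτtv, hτtv]
              simp only
              rw [hDcol _ (h5 x.val hx'.1 hx'.2), hDcol _ (h5 ℓ1 le_rfl (by omega))]
          -- the reindexing map
          set g : Fin (Wt.length + 1) → Fin (W'.length + 1) := fun j =>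
            if h : j.val < ℓ1 then ⟨j.val, by omega⟩
            else if h2 : j.val ≤ ℓ1 + a' then ⟨ℓ1, by omega⟩
            else ⟨j.val + s - a', by have := j.isLt; omega⟩ with hgdef
          have hgmono : Monotone g := by
            intro j1 j2 h12
            have h12' : j1.val ≤ j2.val := h12
            simp only [hgdef]
            split_ifs <;> simp only [Fin.le_def, Fin.val_mk] <;> omega
          -- state after playing (ℓ1, c) on Wt
          have hident : floodMove (SimpleGraph.pathGraph (Wt.length + 1)) τt ⟨ℓ1, by omega⟩ c
              = (pathColouring (floodMove G ω w₀ c) W') ∘ g := by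
            funext j
            simp only [Function.comp_apply, hgdef]
            by_cases hj1 : j.val < ℓ1
            · rw [dif_pos hj1]
              have hnot : ¬ monoLinked (SimpleGraph.pathGraph (Wt.length + 1)) τt
                  ⟨ℓ1, by omega⟩ j := by
                rw [hclass]; omega
              rw [floodMove_eq_of_not_ml hnot, hτtv, pathColouring_eq_getVert]
              simp only
              rw [h3 j.val hj1, floodMove_eq_of_not_ml (h4 j.val hj1)]
            · rw [dif_neg hj1]
              by_cases hj2 : j.val ≤ ℓ1 + a'
              · rw [dif_pos hj2]
                have hml : monoLinked (SimpleGraph.pathGraph (Wt.length + 1)) τt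
                    ⟨ℓ1, by omega⟩ j := by
                  rw [hclass]; omega
                rw [floodMove_eq_of_ml hml, pathColouring_eq_getVert]
                simp only
                rw [floodMove_eq_of_ml h8a]
              · rw [dif_neg hj2]
                have hnot : ¬ monoLinked (SimpleGraph.pathGraph (Wt.length + 1)) τt
                    ⟨ℓ1, by omega⟩ j := by
                  rw [hclass]; omega
                have hnotD : ¬ monoLinked G ω w₀ (W'.getVert (j.val + s - a')) :=
                  h7 _ (by omega) (by have := j.isLt; omega)
                rw [floodMove_eq_of_not_ml hnot, hτtv, pathColouring_eq_getVert]
                simp only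
                rw [h6 j.val (by omega), floodMove_eq_of_not_ml hnotD]
          refine ⟨Wt, ?_⟩
          have hstep : floodCostIn (SimpleGraph.pathGraph (Wt.length + 1))
              (floodMove (SimpleGraph.pathGraph (Wt.length + 1)) τt ⟨ℓ1, by omega⟩ c) d
              ≤ S.length := by
            rw [hident]
            exact master d S.length _ g hgmono hW'
          have := fCI_le_succ_of_move (w := (⟨ℓ1, by omega⟩ : Fin (Wt.length + 1))) (c := c)
            (pathNE _ d) hstep
          simpa using this
        · push_neg at hover
          refine ⟨W', le_trans (le_of_eq ?_) (le_trans hW' (by simp))⟩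
          congr 1
          funext j
          rw [pathColouring_eq_getVert, pathColouring_eq_getVert,
              floodMove_eq_of_not_ml (hover j.val (by have := j.isLt; omega))]
end DirA

/- ### walk to path conversion -/
section ToPath
open FloodAux SimpleGraph
variable {V C : Type*} {G : SimpleGraph V}

theorem support_dropUntil_sublist [DecidableEq V] {v w : V} (p : G.Walk v w) (u : V)
    (h : u ∈ p.support) : (p.dropUntil u h).support.Sublist p.support := by
  have hsup : p.support = (p.takeUntil u h).support ++ (p.dropUntil u h).support.tail := by
    conv_lhs => rw [← p.take_spec h]
    rw [Walk.support_append]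
  have hu : u ∈ (p.takeUntil u h).support := Walk.end_mem_support _
  obtain ⟨A₁, A₂, hA⟩ := List.append_of_mem hu
  rw [hsup, hA, List.append_assoc, List.cons_append]
  have hcons : (p.dropUntil u h).support = u :: (p.dropUntil u h).support.tail :=
    Walk.support_eq_cons _
  rw [hcons]
  refine List.Sublist.trans ?_ (List.sublist_append_right A₁ _)
  exact List.Sublist.cons₂ _ (List.sublist_append_right A₂ _)

theorem support_bypass_sublist [DecidableEq V] {u v : V} (p : G.Walk u v) :
    p.bypass.support.Sublist p.support := by
  induction p with
  | nil => simp [Walk.bypass]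
  | cons ha q ih =>
      simp only [Walk.bypass]
      split_ifs with hs
      · refine List.Sublist.trans (support_dropUntil_sublist _ _ _) ?_
        refine List.Sublist.trans ih ?_
        rw [Walk.support_cons]
        exact List.sublist_cons_self _ _
      · rw [Walk.support_cons, Walk.support_cons]
        exact ih.cons₂ _

theorem exists_path_le_walk (ω : V → C) (d : C) {u v : V} (W : G.Walk u v) :
    ∃ P : G.Walk u v, P.IsPath ∧
      floodCostIn (SimpleGraph.pathGraph (P.length + 1)) (pathColouring ω P) d ≤
      floodCostIn (SimpleGraph.pathGraph (W.length + 1)) (pathColouring ω W) d := by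
  classical
  refine ⟨W.bypass, W.bypass_isPath, ?_⟩
  have hsub := support_bypass_sublist W
  obtain ⟨f, hf⟩ := List.sublist_iff_exists_fin_orderEmbedding_get_eq.1 hsub
  have hlen1 : W.bypass.support.length = W.bypass.length + 1 := Walk.length_support _
  have hlen2 : W.support.length = W.length + 1 := Walk.length_support _
  set g : Fin (W.bypass.length + 1) → Fin (W.length + 1) := fun i =>
    ⟨(f ⟨i.val, by omega⟩).val, by have := (f ⟨i.val, by omega⟩).isLt; omega⟩ with hgdef
  have hgmono : Monotone g := by
    intro i j hij
    simp only [hgdef, Fin.le_def]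
    have : (⟨i.val, by omega⟩ : Fin W.bypass.support.length) ≤ ⟨j.val, by omega⟩ := hij
    exact f.monotone this
  have hident : pathColouring ω W.bypass = (pathColouring ω W) ∘ g := by
    funext i
    simp only [Function.comp_apply, hgdef]
    rw [pathColouring_eq_getVert, pathColouring_eq_getVert]
    simp only
    have h1 : W.bypass.getVert i.val = W.bypass.support.get ⟨i.val, by omega⟩ :=
      (support_get_eq_getVert _ _ _).symm
    have h2 : W.getVert (f ⟨i.val, by omega⟩).val
        = W.support.get ⟨(f ⟨i.val, by omega⟩).val, by omega⟩ :=
      (support_get_eq_getVert _ _ _).symm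
    rw [h1, h2]
    congr 1
    have := hf ⟨i.val, by omega⟩
    convert this using 2
  rw [hident]
  exact master d _ _ g hgmono le_rfl
end ToPath


/-- the minimum number of moves needed in `G` to link `u` and `v`
in colour `d` equals the minimum, over all `u`-`v` paths `P` of `G`, of the cost
of flooding the isolated path `P` (with the induced colouring) in colour `d`. -/
theorem linkCost_eq_min_over_paths {V C : Type*}
    (G : SimpleGraph V) (hG : G.Connected) (ω : V → C) (u v : V) (d : C) :
    linkCostIn G ω u v d =
      sInf {k | ∃ P : G.Walk u v, P.IsPath ∧
        k = floodCostIn (SimpleGraph.pathGraph (P.length + 1))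
              (pathColouring ω P) d} := by
  set N : Set ℕ := {k | ∃ P : G.Walk u v, P.IsPath ∧
      k = floodCostIn (SimpleGraph.pathGraph (P.length + 1)) (pathColouring ω P) d} with hN
  have hNne : N.Nonempty := by
    obtain ⟨W⟩ := hG.preconnected u v
    obtain ⟨P, hP, _⟩ := exists_path_le_walk ω d W
    exact ⟨_, P, hP, rfl⟩
  refine le_antisymm ?_ ?_
  · obtain ⟨P, hP, hk⟩ := Nat.sInf_mem hNne
    rw [hk]
    exact linkCostIn_le_walkCost hG u v d _ ω P le_rfl
  · obtain ⟨S, hlen, hS1, hS2⟩ := Nat.sInf_mem (linkNE hG ω u v d)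
    have hlen' : S.length = linkCostIn G ω u v d := hlen
    obtain ⟨W, hW⟩ := exists_walk_of_link u v d S ω hS1 hS2
    obtain ⟨P, hP, hPW⟩ := exists_path_le_walk ω d W
    have h1 : sInf N ≤ floodCostIn (SimpleGraph.pathGraph (P.length + 1))
        (pathColouring ω P) d := Nat.sInf_le ⟨P, hP, rfl⟩
    omega
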